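/- For all nonnegative integers p and k: S(p+3, k+3) − 3·S(p+2, k+3) + 2·S(p+1, k+3) = Σ_{j=0}^{p} C(p,j) 3^{p−j} S(j,k), where S denotes the Stirling numbers of the second kind. -/

import Mathlib

open Finset

/-- Stirling numbers of the second kind. -/
def stirling2 : ℕ → ℕ → ℕ
  | 0, 0 => 1
  | 0, _ + 1 => 0
  | _ + 1, 0 => 0
  | p + 1, k + 1 => stirling2 p k + (k + 1) * stirling2 p (k + 1)

/-- Unsigned Stirling numbers of the first kind. -/
def stirling1 : ℕ → ℕ → ℕ
  | 0, 0 => 1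
  | 0, _ + 1 => 0
  | _ + 1, 0 => 0
  | p + 1, k + 1 => stirling1 p k + p * stirling1 p (k + 1)

/-- Stirling numbers of the second kind with integer second argument (0 when negative). -/
def stirling2Z (p : ℕ) (k : ℤ) : ℤ :=
  if k < 0 then 0 else stirling2 p k.toNat

/-- Generalized Stirling number of the second kind
`S_{a1,b1}^{a2,b2,p2}(p1,k)`. -/
noncomputable def gsn (a1 b1 a2 b2 : ℂ) (p1 p2 k : ℕ) : ℂ :=
  (1 / (k.factorial : ℂ)) * ∑ j ∈ range (k + 1),
    (-1) ^ j * (k.choose j : ℂ) * (a1 * ((k : ℂ) - j) + b1) ^ p1 *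
      (a2 * ((k : ℂ) - j) + b2) ^ p2

/-- Generalized Stirling number with integer index (0 when negative). -/
noncomputable def gsnZ (a1 b1 a2 b2 : ℂ) (p1 p2 : ℕ) (k : ℤ) : ℂ :=
  if k < 0 then 0 else gsn a1 b1 a2 b2 p1 p2 k.toNat

lemma st_rec (p k : ℕ) :
    stirling2 (p + 1) (k + 1) = stirling2 p k + (k + 1) * stirling2 p (k + 1) := rfl

lemma st_zero (p : ℕ) : stirling2 (p + 1) 0 = 0 := rfl

lemma st_zero' (k : ℕ) : stirling2 0 (k + 1) = 0 := rfl

lemma st_lt : ∀ n k, n < k → stirling2 n k = 0 := by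
  intro n
  induction n with
  | zero => intro k h; cases k with
    | zero => omega
    | succ k => rfl
  | succ n ih =>
    intro k h
    cases k with
    | zero => omega
    | succ k =>
      rw [st_rec, ih k (by omega), ih (k+1) (by omega)]
      simp

lemma st_one (n : ℕ) : stirling2 (n + 1) 1 = 1 := by
  induction n with
  | zero => rfl
  | succ n ih => rw [st_rec, st_zero, ih]

lemma st_two (n : ℕ) : (stirling2 (n + 1) 2 : ℤ) + 1 = 2 ^ n := by
  induction n with
  | zero => rfl
  | succ n ih =>
    rw [st_rec, st_one]
    push_cast
    push_cast at ih
    rw [pow_succ]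
    linarith

lemma Rzero (p : ℕ) :
    (∑ j ∈ range (p + 1), (p.choose j : ℤ) * 3 ^ (p - j) * stirling2 j 0) = 3 ^ p := by
  rw [Finset.sum_range_succ']
  simp [st_zero, show stirling2 0 0 = 1 from rfl]

lemma Rrec (p k : ℕ) :
    (∑ j ∈ range (p + 1 + 1), ((p + 1).choose j : ℤ) * 3 ^ (p + 1 - j) * stirling2 j (k + 1)) =
      (∑ j ∈ range (p + 1), (p.choose j : ℤ) * 3 ^ (p - j) * stirling2 j k) +
        ((k : ℤ) + 4) * ∑ j ∈ range (p + 1), (p.choose j : ℤ) * 3 ^ (p - j) * stirling2 j (k + 1) := by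
  have hA : (∑ j ∈ range (p + 1 + 1), (p.choose j : ℤ) * 3 ^ (p + 1 - j) * stirling2 j (k + 1)) =
      3 * ∑ j ∈ range (p + 1), (p.choose j : ℤ) * 3 ^ (p - j) * stirling2 j (k + 1) := by
    rw [Finset.sum_range_succ, Nat.choose_succ_self, Finset.mul_sum]
    simp only [Nat.cast_zero, zero_mul, add_zero]
    apply Finset.sum_congr rfl
    intro i hi
    have hip : i ≤ p := by simpa using Nat.lt_succ_iff.mp (Finset.mem_range.mp hi)
    rw [show p + 1 - i = (p - i) + 1 by omega, pow_succ]
    ring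
  have hA' : (∑ j ∈ range (p + 1 + 1), (p.choose j : ℤ) * 3 ^ (p + 1 - j) * stirling2 j (k + 1)) =
      ∑ i ∈ range (p + 1), (p.choose (i + 1) : ℤ) * 3 ^ (p - i) * stirling2 (i + 1) (k + 1) := by
    rw [Finset.sum_range_succ']
    simp [st_zero', Nat.succ_sub_succ]
  rw [Finset.sum_range_succ']
  simp only [st_zero', Nat.cast_zero, mul_zero, add_zero, Nat.succ_sub_succ]
  have key : ∀ i ∈ range (p + 1),
      ((p + 1).choose (i + 1) : ℤ) * 3 ^ (p - i) * stirling2 (i + 1) (k + 1) =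
        ((p.choose i : ℤ) * 3 ^ (p - i) * stirling2 i k +
          ((k : ℤ) + 1) * ((p.choose i : ℤ) * 3 ^ (p - i) * stirling2 i (k + 1))) +
          (p.choose (i + 1) : ℤ) * 3 ^ (p - i) * stirling2 (i + 1) (k + 1) := by
    intro i _
    rw [Nat.choose_succ_succ, st_rec]
    push_cast
    ring
  rw [Finset.sum_congr rfl key, Finset.sum_add_distrib, Finset.sum_add_distrib, ← hA', hA,
    ← Finset.mul_sum]
  ring

theorem stmt12 (p k : ℕ) :
    (stirling2 (p + 3) (k + 3) : ℤ) - 3 * stirling2 (p + 2) (k + 3) +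
        2 * stirling2 (p + 1) (k + 3) =
      ∑ j ∈ range (p + 1), (p.choose j : ℤ) * 3 ^ (p - j) * stirling2 j k := by
  induction p generalizing k with
  | zero =>
    cases k with
    | zero =>
      norm_num [Finset.sum_range_one, show stirling2 3 3 = 1 from rfl,
        show stirling2 2 3 = 0 from rfl, show stirling2 1 3 = 0 from rfl,
        show stirling2 0 0 = 1 by decide]
    | succ k =>
      have a1 : stirling2 (0 + 3) (k + 1 + 3) = 0 := st_lt _ _ (by omega)
      have a2 : stirling2 (0 + 2) (k + 1 + 3) = 0 := st_lt _ _ (by omega)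
      have a3 : stirling2 (0 + 1) (k + 1 + 3) = 0 := st_lt _ _ (by omega)
      have a4 : stirling2 0 (k + 1) = 0 := rfl
      simp [a1, a2, a3, a4]
  | succ p ih =>
    cases k with
    | zero =>
      have e1 : stirling2 (p + 1 + 3) (0 + 3) =
          stirling2 (p + 3) 2 + 3 * stirling2 (p + 3) (0 + 3) := st_rec (p + 3) 2
      have e2 : stirling2 (p + 1 + 2) (0 + 3) =
          stirling2 (p + 2) 2 + 3 * stirling2 (p + 2) (0 + 3) := st_rec (p + 2) 2
      have e3 : stirling2 (p + 1 + 1) (0 + 3) =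
          stirling2 (p + 1) 2 + 3 * stirling2 (p + 1) (0 + 3) := st_rec (p + 1) 2
      have hk0 := ih 0
      rw [Rzero p] at hk0
      have t2 : (stirling2 (p + 3) 2 : ℤ) + 1 = 2 ^ (p + 2) := st_two (p + 2)
      have t1 : (stirling2 (p + 2) 2 : ℤ) + 1 = 2 ^ (p + 1) := st_two (p + 1)
      have t0 : (stirling2 (p + 1) 2 : ℤ) + 1 = 2 ^ p := st_two p
      have E1 := congrArg (Nat.cast : ℕ → ℤ) e1
      have E2 := congrArg (Nat.cast : ℕ → ℤ) e2
      have E3 := congrArg (Nat.cast : ℕ → ℤ) e3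
      push_cast at E1 E2 E3
      rw [Rzero (p + 1)]
      linear_combination E1 - 3 * E2 + 2 * E3 + 3 * hk0 + t2 - 3 * t1 + 2 * t0
    | succ k =>
      have e1 : stirling2 (p + 1 + 3) (k + 1 + 3) =
          stirling2 (p + 3) (k + 3) + (k + 3 + 1) * stirling2 (p + 3) (k + 1 + 3) :=
        st_rec (p + 3) (k + 3)
      have e2 : stirling2 (p + 1 + 2) (k + 1 + 3) =
          stirling2 (p + 2) (k + 3) + (k + 3 + 1) * stirling2 (p + 2) (k + 1 + 3) :=
        st_rec (p + 2) (k + 3)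
      have e3 : stirling2 (p + 1 + 1) (k + 1 + 3) =
          stirling2 (p + 1) (k + 3) + (k + 3 + 1) * stirling2 (p + 1) (k + 1 + 3) :=
        st_rec (p + 1) (k + 3)
      have h1 := ih k
      have h2 := ih (k + 1)
      have E1 := congrArg (Nat.cast : ℕ → ℤ) e1
      have E2 := congrArg (Nat.cast : ℕ → ℤ) e2
      have E3 := congrArg (Nat.cast : ℕ → ℤ) e3
      push_cast at E1 E2 E3
      rw [Rrec p k]
      linear_combination E1 - 3 * E2 + 2 * E3 + h1 + ((k : ℤ) + 4) * h2
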